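/- Let z > 0 be a real number and let γ denote the Euler–Mascheroni constant. Then the mirror oscillatory integral of ℙ¹ satisfies lim_{q→0⁺} ( ∫_0^∞ exp(−(x + q/x)/z) dx/x − ( log(z²/q) − 2γ ) ) = 0. -/

import Mathlib

open MeasureTheory

section MirrorP1Aux

open MeasureTheory Set Filter Real

lemma gamma_integral_value :
    ∫ t in Set.Ioi (0:ℝ), Real.exp (-t) * Real.log t = -Real.eulerMascheroniConstant := by
  have h1 : HasDerivAt Complex.GammaIntegral
      (∫ t : ℝ in Ioi 0, (t:ℂ) ^ ((1:ℂ) - 1) * (Real.log t * Real.exp (-t))) 1 :=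
    Complex.hasDerivAt_GammaIntegral (by norm_num)
  have h2 : (∫ t : ℝ in Ioi 0, (t:ℂ) ^ ((1:ℂ) - 1) * (Real.log t * Real.exp (-t)))
      = ((∫ t in Set.Ioi (0:ℝ), Real.exp (-t) * Real.log t : ℝ) : ℂ) := by
    have e1 : (∫ t : ℝ in Ioi 0, (t:ℂ) ^ ((1:ℂ) - 1) * (Real.log t * Real.exp (-t)))
        = ∫ t : ℝ in Ioi 0, ((Real.exp (-t) * Real.log t : ℝ) : ℂ) := by
      refine setIntegral_congr_fun measurableSet_Ioi (fun t ht => ?_)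
      push_cast
      rw [sub_self, Complex.cpow_zero, one_mul, mul_comm]
    rw [e1]
    exact integral_ofReal
  rw [h2] at h1
  have h3 : HasDerivAt (fun x : ℝ => (Complex.GammaIntegral x).re)
      (((∫ t in Set.Ioi (0:ℝ), Real.exp (-t) * Real.log t : ℝ) : ℂ)).re 1 :=
    h1.real_of_complex
  have h4 : HasDerivAt Real.Gamma
      (∫ t in Set.Ioi (0:ℝ), Real.exp (-t) * Real.log t) 1 := by
    simp only [Complex.ofReal_re] at h3
    refine h3.congr_of_eventuallyEq ?_
    filter_upwards [eventually_gt_nhds (show (0:ℝ) < 1 by norm_num)] with x hx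
    have : (x:ℂ).GammaIntegral = Complex.Gamma x :=
      (Complex.Gamma_eq_integral (by simpa using hx)).symm
    rw [this, Complex.Gamma_ofReal, Complex.ofReal_re]
  exact h4.unique Real.hasDerivAt_Gamma_one

-- |log t| ≤ 2 * t^(-1/2) on (0,1]
lemma abs_log_le (t : ℝ) (h0 : 0 < t) (h1 : t ≤ 1) : |Real.log t| ≤ 2 * t ^ (-(1:ℝ)/2) := by
  rw [abs_of_nonpos (Real.log_nonpos h0.le h1)]
  have hs : Real.log t = 2 * Real.log (t ^ ((1:ℝ)/2)) := by
    rw [Real.log_rpow h0]; ring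
  rw [hs]
  have hlt : Real.log (t ^ ((1:ℝ)/2)) ≥ 1 - (t ^ ((1:ℝ)/2))⁻¹ := by
    have h2 : Real.log ((t ^ ((1:ℝ)/2))⁻¹) ≤ (t ^ ((1:ℝ)/2))⁻¹ - 1 :=
      Real.log_le_sub_one_of_pos (by positivity)
    rw [Real.log_inv] at h2
    linarith
  have : (t ^ ((1:ℝ)/2))⁻¹ = t ^ (-(1:ℝ)/2) := by
    rw [← Real.rpow_neg h0.le]; norm_num
  rw [← this]
  have hp : (0:ℝ) < (t ^ ((1:ℝ)/2))⁻¹ := by positivity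
  nlinarith [hlt]

lemma integrableOn_exp_mul_log_Ioc :
    IntegrableOn (fun t => Real.exp (-t) * Real.log t) (Set.Ioc (0:ℝ) 1) := by
  have hb : IntegrableOn (fun t : ℝ => 2 * t ^ (-(1:ℝ)/2)) (Set.Ioc (0:ℝ) 1) := by
    have h0 := intervalIntegral.intervalIntegrable_rpow' (r := -(1:ℝ)/2) (by norm_num) (a := 0) (b := 1)
    rw [intervalIntegrable_iff_integrableOn_Ioc_of_le (by norm_num)] at h0
    exact h0.const_mul 2
  refine hb.integrable.mono' ?_ ?_
  · exact ((measurable_exp.comp measurable_neg).mul (Real.measurable_log)).aestronglyMeasurable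
  · rw [ae_restrict_iff' measurableSet_Ioc]
    filter_upwards with t ht
    rw [Real.norm_eq_abs]
    have h1 : |Real.exp (-t) * Real.log t| ≤ |Real.log t| := by
      rw [abs_mul, abs_of_nonneg (Real.exp_pos _).le]
      nlinarith [Real.exp_le_one_iff.2 (neg_nonpos.2 ht.1.le), abs_nonneg (Real.log t),
        Real.exp_pos (-t)]
    exact h1.trans (abs_log_le t ht.1 ht.2)

lemma integrableOn_exp_mul_log_Ioi :
    IntegrableOn (fun t => Real.exp (-t) * Real.log t) (Set.Ioi (1:ℝ)) := by
  have hb : IntegrableOn (fun t : ℝ => Real.exp (-t) * t) (Set.Ioi (1:ℝ)) := by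
    have := Real.GammaIntegral_convergent (s := 2) (by norm_num)
    have h2 : IntegrableOn (fun t : ℝ => Real.exp (-t) * t) (Set.Ioi (0:ℝ)) := by
      refine this.congr_fun (fun t ht => ?_) measurableSet_Ioi
      norm_num
    exact h2.mono_set (Set.Ioi_subset_Ioi (by norm_num))
  refine hb.integrable.mono' ?_ ?_
  · exact ((measurable_exp.comp measurable_neg).mul (Real.measurable_log)).aestronglyMeasurable
  · rw [ae_restrict_iff' measurableSet_Ioi]
    filter_upwards with t ht
    have h0 : (0:ℝ) < t := lt_trans one_pos ht
    rw [Real.norm_eq_abs, abs_mul, abs_of_nonneg (Real.exp_pos _).le,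
      abs_of_nonneg (Real.log_nonneg ht.le)]
    have := Real.log_le_sub_one_of_pos h0
    nlinarith [Real.exp_pos (-t)]

lemma integrableOn_sub_div_Ioc :
    IntegrableOn (fun t => (Real.exp (-t) - 1) / t) (Set.Ioc (0:ℝ) 1) := by
  refine Integrable.mono' (g := fun _ => (1:ℝ)) (integrableOn_const measure_Ioc_lt_top.ne) ?_ ?_
  · exact (((measurable_exp.comp measurable_neg).sub measurable_const).div
      measurable_id).aestronglyMeasurable
  · rw [ae_restrict_iff' measurableSet_Ioc]
    filter_upwards with t ht
    rw [Real.norm_eq_abs, abs_div, abs_of_pos ht.1, div_le_one ht.1, abs_of_nonpos (by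
      simp [Real.exp_le_one_iff.2 (neg_nonpos.2 ht.1.le)])]
    have := Real.add_one_le_exp (-t)
    linarith

lemma integrableOn_exp_div_Ioi :
    IntegrableOn (fun t => Real.exp (-t) / t) (Set.Ioi (1:ℝ)) := by
  have hb : IntegrableOn (fun t : ℝ => Real.exp (-t)) (Set.Ioi (1:ℝ)) := by
    have := exp_neg_integrableOn_Ioi (1:ℝ) (b := 1) one_pos
    simpa using this
  refine hb.mono' ?_ ?_
  · exact ((measurable_exp.comp measurable_neg).div measurable_id).aestronglyMeasurable
  · rw [ae_restrict_iff' measurableSet_Ioi]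
    filter_upwards with t ht
    rw [Real.norm_eq_abs, abs_div, abs_of_pos (Real.exp_pos _), abs_of_pos (lt_trans one_pos ht)]
    have h1t : (1:ℝ) < t := ht
    rw [div_le_iff₀ (lt_trans one_pos h1t)]
    nlinarith [Real.exp_pos (-t)]

lemma gammaInt1 : ∫ t in Set.Ioc (0:ℝ) 1, Real.exp (-t) * Real.log t
    = ∫ t in Set.Ioc (0:ℝ) 1, (Real.exp (-t) - 1) / t := by
  set u : ℝ → ℝ := fun t => (Real.exp (-t) - 1) * Real.log t with hu
  have hderiv : ∀ x ∈ Set.Ioo (0:ℝ) 1, HasDerivAt u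
      (-(Real.exp (-x) * Real.log x) + (Real.exp (-x) - 1) / x) x := by
    intro x hx
    have h1 : HasDerivAt (fun t : ℝ => Real.exp (-t)) (-Real.exp (-x)) x := by
      have h0 := (Real.hasDerivAt_exp (-x)).comp x (hasDerivAt_neg x)
      rw [mul_neg_one] at h0
      exact h0
    have h2 := ((h1.sub_const 1).mul (Real.hasDerivAt_log hx.1.ne'))
    refine h2.congr_deriv ?_
    ring
  have hbound : ∀ t ∈ Set.Ioc (0:ℝ) 1, ‖u t‖ ≤ |Real.log t * t| := by
    intro t ht
    have hle : 1 - Real.exp (-t) ≤ t := by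
      have := Real.add_one_le_exp (-t); linarith
    have h1 : |Real.exp (-t) - 1| ≤ |t| := by
      rw [abs_of_nonpos (by simp [Real.exp_le_one_iff.2 (neg_nonpos.2 ht.1.le)]),
        abs_of_pos ht.1]
      linarith
    calc ‖u t‖ = |Real.exp (-t) - 1| * |Real.log t| := abs_mul _ _
      _ ≤ |t| * |Real.log t| := mul_le_mul_of_nonneg_right h1 (abs_nonneg _)
      _ = |Real.log t * t| := by rw [abs_mul, mul_comm]
  have hcont : ContinuousOn u (Set.Icc (0:ℝ) 1) := by
    intro x hx
    rcases eq_or_lt_of_le hx.1 with h0 | h0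
    · rw [← h0, ← Set.Ioc_insert_left zero_le_one, continuousWithinAt_insert_self]
      have hu0 : u 0 = 0 := by simp [hu]
      have hb : Filter.Tendsto (fun t : ℝ => Real.log t * t) (nhdsWithin 0 (Set.Ioi 0)) (nhds 0) := by
        simpa using tendsto_log_mul_rpow_nhdsGT_zero one_pos
      have habs : Filter.Tendsto (fun t : ℝ => |Real.log t * t|)
          (nhdsWithin 0 (Set.Ioc 0 1)) (nhds 0) := by
        have h2 := hb.abs
        rw [abs_zero] at h2
        exact h2.mono_left (nhdsWithin_mono _ Set.Ioc_subset_Ioi_self)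
      have key : Filter.Tendsto u (nhdsWithin 0 (Set.Ioc 0 1)) (nhds 0) := by
        refine squeeze_zero_norm' ?_ habs
        filter_upwards [self_mem_nhdsWithin] with t ht using hbound t ht
      rw [ContinuousWithinAt]
      convert key using 2
    · exact (((Real.continuous_exp.comp continuous_neg).sub continuous_const).continuousAt.mul
        (Real.continuousAt_log h0.ne')).continuousWithinAt
  have hint : IntervalIntegrable
      (fun x => -(Real.exp (-x) * Real.log x) + (Real.exp (-x) - 1) / x) volume 0 1 := by
    rw [intervalIntegrable_iff_integrableOn_Ioc_of_le zero_le_one]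
    exact (integrableOn_exp_mul_log_Ioc.neg.add integrableOn_sub_div_Ioc)
  have hftc := intervalIntegral.integral_eq_sub_of_hasDeriv_right_of_le zero_le_one hcont
    (fun x hx => (hderiv x hx).hasDerivWithinAt) hint
  have hu1 : u 1 = 0 := by simp [hu]
  have hu0 : u 0 = 0 := by simp [hu]
  rw [hu1, hu0, sub_zero, intervalIntegral.integral_of_le zero_le_one] at hftc
  have heq : ∫ x in Set.Ioc (0:ℝ) 1, ((Real.exp (-x) - 1) / x - Real.exp (-x) * Real.log x)
      = ∫ x in Set.Ioc (0:ℝ) 1, (-(Real.exp (-x) * Real.log x) + (Real.exp (-x) - 1) / x) :=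
    setIntegral_congr_fun measurableSet_Ioc fun x _ => by ring
  rw [hftc, integral_sub integrableOn_sub_div_Ioc integrableOn_exp_mul_log_Ioc] at heq
  linarith [heq]

lemma gammaInt2 : ∫ t in Set.Ioi (1:ℝ), Real.exp (-t) * Real.log t
    = ∫ t in Set.Ioi (1:ℝ), Real.exp (-t) / t := by
  set v : ℝ → ℝ := fun t => -(Real.exp (-t) * Real.log t) with hv
  have hderiv : ∀ x ∈ Set.Ici (1:ℝ), HasDerivAt v
      (Real.exp (-x) * Real.log x - Real.exp (-x) / x) x := by
    intro x hx
    have hx0 : (0:ℝ) < x := lt_of_lt_of_le one_pos hx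
    have h1 : HasDerivAt (fun t : ℝ => Real.exp (-t)) (-Real.exp (-x)) x := by
      have h0 := (Real.hasDerivAt_exp (-x)).comp x (hasDerivAt_neg x)
      rw [mul_neg_one] at h0
      exact h0
    have h2 := (h1.mul (Real.hasDerivAt_log hx0.ne')).neg
    refine h2.congr_deriv ?_
    ring
  have hint : IntegrableOn (fun x => Real.exp (-x) * Real.log x - Real.exp (-x) / x)
      (Set.Ioi (1:ℝ)) :=
    integrableOn_exp_mul_log_Ioi.sub integrableOn_exp_div_Ioi
  have hlim : Filter.Tendsto v Filter.atTop (nhds 0) := by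
    have hb : Filter.Tendsto (fun t : ℝ => t * Real.exp (-t)) Filter.atTop (nhds 0) := by
      simpa using Real.tendsto_pow_mul_exp_neg_atTop_nhds_zero 1
    refine squeeze_zero_norm' ?_ hb
    filter_upwards [Filter.eventually_ge_atTop (1:ℝ)] with t ht
    have ht0 : (0:ℝ) < t := lt_of_lt_of_le one_pos ht
    rw [hv, Real.norm_eq_abs, abs_neg, abs_mul, abs_of_pos (Real.exp_pos _),
      abs_of_nonneg (Real.log_nonneg ht)]
    have hlog := Real.log_le_sub_one_of_pos ht0
    nlinarith [Real.exp_pos (-t), Real.log_nonneg ht]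
  have hftc := integral_Ioi_of_hasDerivAt_of_tendsto'
    (fun x hx => hderiv x hx) hint hlim
  have hv1 : v 1 = 0 := by simp [hv]
  rw [hv1, sub_zero] at hftc
  rw [integral_sub integrableOn_exp_mul_log_Ioi integrableOn_exp_div_Ioi] at hftc
  linarith [hftc]

lemma gamma_identity :
    (∫ t in Set.Ioc (0:ℝ) 1, (Real.exp (-t) - 1) / t) + (∫ t in Set.Ioi (1:ℝ), Real.exp (-t) / t)
      = -Real.eulerMascheroniConstant := by
  have hsplit : ∫ t in Set.Ioi (0:ℝ), Real.exp (-t) * Real.log t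
      = (∫ t in Set.Ioc (0:ℝ) 1, Real.exp (-t) * Real.log t)
        + ∫ t in Set.Ioi (1:ℝ), Real.exp (-t) * Real.log t := by
    rw [← setIntegral_union (Set.Ioc_disjoint_Ioi le_rfl) measurableSet_Ioi
      integrableOn_exp_mul_log_Ioc integrableOn_exp_mul_log_Ioi,
      Set.Ioc_union_Ioi_eq_Ioi zero_le_one]
  rw [← gammaInt1, ← gammaInt2, ← hsplit, gamma_integral_value]

lemma osc_meas (s : ℝ) : Measurable (fun t : ℝ => Real.exp (-(t + s/t)) / t) :=
  ((measurable_id.add (measurable_const.div measurable_id)).neg.exp).div measurable_id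

lemma exp_div_le (s t : ℝ) (hs : 0 < s) (ht : 0 < t) : Real.exp (-(s/t)) / t ≤ 1 / s := by
  have h1 : s / t ≤ Real.exp (s / t) := (Real.add_one_le_exp (s/t)).trans' (by linarith)
  have h2 : Real.exp (-(s/t)) ≤ t / s := by
    rw [Real.exp_neg, inv_le_comm₀ (Real.exp_pos _) (by positivity), inv_div]
    exact h1
  rw [div_le_div_iff₀ ht hs]
  have h3 : Real.exp (-(s/t)) * s ≤ (t/s) * s := mul_le_mul_of_nonneg_right h2 hs.le
  have h4 : t/s*s = t := div_mul_cancel₀ t hs.ne'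
  linarith

lemma integrableOn_osc {s : ℝ} (hs : 0 < s) :
    IntegrableOn (fun t : ℝ => Real.exp (-(t + s/t)) / t) (Set.Ioi (0:ℝ)) := by
  have hb0 : IntegrableOn (fun t : ℝ => Real.exp (-t)) (Set.Ioi (0:ℝ)) := by
    have h := exp_neg_integrableOn_Ioi (0:ℝ) (b := 1) one_pos
    refine h.congr_fun (fun t _ => ?_) measurableSet_Ioi
    norm_num
  have hb : IntegrableOn (fun t : ℝ => Real.exp (-t) / s) (Set.Ioi (0:ℝ)) := hb0.div_const s
  refine hb.mono' (osc_meas s).aestronglyMeasurable ?_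
  rw [ae_restrict_iff' measurableSet_Ioi]
  filter_upwards with t ht
  have ht0 : (0:ℝ) < t := ht
  rw [Real.norm_eq_abs, abs_of_pos (by positivity)]
  have hsplit : Real.exp (-(t + s/t)) = Real.exp (-t) * Real.exp (-(s/t)) := by
    rw [← Real.exp_add]; ring_nf
  rw [hsplit, mul_div_assoc]
  have := exp_div_le s t hs ht0
  calc Real.exp (-t) * (Real.exp (-(s/t)) / t) ≤ Real.exp (-t) * (1/s) :=
        mul_le_mul_of_nonneg_left this (Real.exp_pos _).le
    _ = Real.exp (-t) / s := by ring

lemma osc_scaling {z q : ℝ} (hz : 0 < z) (hq : 0 < q) :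
    ∫ x in Set.Ioi (0:ℝ), Real.exp (-(x + q / x) / z) / x
      = ∫ t in Set.Ioi (0:ℝ), Real.exp (-(t + (q / z^2) / t)) / t := by
  have h := integral_comp_mul_left_Ioi (fun x => Real.exp (-(x + q / x) / z) / x) 0 hz
  rw [mul_zero] at h
  have h2 : ∫ x in Set.Ioi (0:ℝ), Real.exp (-(x + q / x) / z) / x
      = z * ∫ t in Set.Ioi (0:ℝ), Real.exp (-(z * t + q / (z * t)) / z) / (z * t) := by
    rw [h, smul_eq_mul, ← mul_assoc, mul_inv_cancel₀ hz.ne', one_mul]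
  rw [h2, ← integral_const_mul]
  refine setIntegral_congr_fun measurableSet_Ioi (fun t ht => ?_)
  have ht0 : (0:ℝ) < t := ht
  have harg : -(z * t + q / (z * t)) / z = -(t + (q / z^2) / t) := by
    field_simp
  rw [harg]
  field_simp

lemma osc_inversion {r : ℝ} (hr : 0 < r) :
    ∫ t in Set.Ioo (0:ℝ) r, Real.exp (-(t + r^2 / t)) / t
      = ∫ t in Set.Ioi r, Real.exp (-(t + r^2 / t)) / t := by
  have himg : (fun t : ℝ => r^2 / t) '' Set.Ioi r = Set.Ioo 0 r := by
    ext y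
    constructor
    · rintro ⟨t, ht, rfl⟩
      have ht' : r < t := ht
      have ht0 : 0 < t := lt_trans hr ht'
      constructor
      · positivity
      · rw [div_lt_iff₀ ht0]
        nlinarith
    · rintro ⟨hy0, hyr⟩
      refine ⟨r^2 / y, ?_, ?_⟩
      · have : r < r^2 / y := by
          rw [lt_div_iff₀ hy0]
          nlinarith
        exact this
      · field_simp
  have hderiv : ∀ t ∈ Set.Ioi r, HasDerivWithinAt (fun t : ℝ => r^2 / t)
      (-(r^2 / t^2)) (Set.Ioi r) t := by
    intro t ht
    have ht0 : (0:ℝ) < t := lt_trans hr ht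
    have h1 : HasDerivAt (fun t : ℝ => r^2 / t) (-(r^2 / t^2)) t := by
      have := (hasDerivAt_inv ht0.ne').const_mul (r^2)
      simpa [div_eq_mul_inv, neg_div] using this
    exact h1.hasDerivWithinAt
  have hinj : Set.InjOn (fun t : ℝ => r^2 / t) (Set.Ioi r) := by
    intro a ha b hb hab
    have ha0 : (0:ℝ) < a := lt_trans hr ha
    have hb0 : (0:ℝ) < b := lt_trans hr hb
    have hr2 : (0:ℝ) < r^2 := by positivity
    field_simp at hab
    exact hab.symm
  have hsub := integral_image_eq_integral_abs_deriv_smul measurableSet_Ioi hderiv hinj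
    (fun x => Real.exp (-(x + r^2 / x)) / x)
  rw [himg] at hsub
  rw [hsub]
  refine setIntegral_congr_fun measurableSet_Ioi (fun t ht => ?_)
  have ht' : r < t := ht
  have ht0 : (0:ℝ) < t := lt_trans hr ht'
  have hcanc : r^2 / (r^2 / t) = t := by field_simp
  rw [smul_eq_mul, abs_neg, abs_of_pos (by positivity : (0:ℝ) < r^2 / t^2), hcanc]
  have harg : -(r^2 / t + t) = -(t + r^2 / t) := by ring
  rw [harg]
  field_simp

lemma osc_double {r : ℝ} (hr : 0 < r) :
    ∫ t in Set.Ioi (0:ℝ), Real.exp (-(t + r^2 / t)) / t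
      = 2 * ∫ t in Set.Ioi r, Real.exp (-(t + r^2 / t)) / t := by
  have hint := integrableOn_osc (s := r^2) (by positivity)
  rw [← Set.Ioc_union_Ioi_eq_Ioi hr.le,
    setIntegral_union (Set.Ioc_disjoint_Ioi le_rfl) measurableSet_Ioi
      (hint.mono_set Set.Ioc_subset_Ioi_self) (hint.mono_set (Set.Ioi_subset_Ioi hr.le)),
    integral_Ioc_eq_integral_Ioo, osc_inversion hr]
  ring

lemma indicator_integral_Ioi0 {s : Set ℝ} (hs : MeasurableSet s) (hsub : s ⊆ Set.Ioi 0)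
    (g : ℝ → ℝ) :
    ∫ t in Set.Ioi (0:ℝ), s.indicator g t = ∫ t in s, g t := by
  rw [integral_indicator hs, Measure.restrict_restrict hs, Set.inter_eq_self_of_subset_left hsub]

lemma indicator_integrable_Ioi0 {s : Set ℝ} (hs : MeasurableSet s) (hsub : s ⊆ Set.Ioi 0)
    {g : ℝ → ℝ} (hg : IntegrableOn g s) :
    Integrable (s.indicator g) (volume.restrict (Set.Ioi 0)) := by
  rw [integrable_indicator_iff hs, IntegrableOn, Measure.restrict_restrict hs,
    Set.inter_eq_self_of_subset_left hsub]
  exact hg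

lemma tendsto_F :
    Filter.Tendsto (fun r : ℝ => ∫ t in Set.Ioi (0:ℝ),
      ((Set.Ioi r).indicator (fun u => Real.exp (-(u + r^2/u))/u) t
        - (Set.Ioc r 1).indicator (fun u => 1/u) t))
      (nhdsWithin 0 (Set.Ioi 0)) (nhds (-Real.eulerMascheroniConstant)) := by
  set hfun : ℝ → ℝ := fun t => (Set.Ioc (0:ℝ) 1).indicator (fun u => (Real.exp (-u) - 1)/u) t
      + (Set.Ioi (1:ℝ)).indicator (fun u => Real.exp (-u)/u) t with hhfun
  have hval : ∫ t in Set.Ioi (0:ℝ), hfun t = -Real.eulerMascheroniConstant := by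
    rw [hhfun]
    rw [integral_add
      (indicator_integrable_Ioi0 measurableSet_Ioc Set.Ioc_subset_Ioi_self integrableOn_sub_div_Ioc)
      (indicator_integrable_Ioi0 measurableSet_Ioi (Set.Ioi_subset_Ioi zero_le_one) integrableOn_exp_div_Ioi),
      indicator_integral_Ioi0 measurableSet_Ioc Set.Ioc_subset_Ioi_self,
      indicator_integral_Ioi0 measurableSet_Ioi (Set.Ioi_subset_Ioi zero_le_one)]
    exact gamma_identity
  rw [← hval]
  refine tendsto_integral_filter_of_dominated_convergence
    (bound := fun t => (Set.Ioc (0:ℝ) 1).indicator (fun _ => (2:ℝ)) t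
      + (Set.Ioi (1:ℝ)).indicator (fun u => Real.exp (-u)) t) ?_ ?_ ?_ ?_
  · -- measurability
    filter_upwards with r
    refine Measurable.aestronglyMeasurable (Measurable.sub ?_ ?_)
    · exact (((measurable_id.add (measurable_const.div measurable_id)).neg.exp).div
        measurable_id).indicator measurableSet_Ioi
    · exact (measurable_const.div measurable_id).indicator measurableSet_Ioc
  · -- bound
    filter_upwards [self_mem_nhdsWithin] with r hr
    rw [ae_restrict_iff' measurableSet_Ioi]
    filter_upwards with t ht
    have ht0 : (0:ℝ) < t := ht
    have hr0 : (0:ℝ) < r := hr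
    simp only [Set.indicator_apply, Set.mem_Ioi, Set.mem_Ioc, Real.norm_eq_abs]
    rcases le_or_gt t 1 with h1 | h1
    · rw [if_pos (And.intro ht0 h1), if_neg (not_lt.2 h1)]
      rcases le_or_gt t r with htr | htr
      · rw [if_neg (not_lt.2 htr), if_neg (fun hc => absurd hc.1 (not_lt.2 htr))]
        norm_num
      · rw [if_pos htr, if_pos (And.intro htr h1)]
        have hexp1 : Real.exp (-(t + r^2/t)) ≤ 1 := by
          rw [Real.exp_le_one_iff]
          have : (0:ℝ) < r^2/t := by positivity
          linarith
        have hexp2 : 1 - Real.exp (-(t + r^2/t)) ≤ t + r^2/t := by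
          have := Real.add_one_le_exp (-(t + r^2/t)); linarith
        have hq : r^2/t ≤ t := by
          rw [div_le_iff₀ ht0]
          nlinarith
        rw [← sub_div, abs_div, abs_of_pos ht0, div_le_iff₀ ht0,
          abs_of_nonpos (by linarith)]
        nlinarith
    · rw [if_neg (show ¬(0 < t ∧ t ≤ 1) from fun hc => absurd hc.2 (not_le.2 h1)), if_pos h1,
        if_neg (show ¬(r < t ∧ t ≤ 1) from fun hc => absurd hc.2 (not_le.2 h1))]
      rcases le_or_gt t r with htr | htr
      · rw [if_neg (not_lt.2 htr)]
        norm_num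
        positivity
      · rw [if_pos htr, sub_zero, abs_of_pos (by positivity), zero_add]
        have h2 : Real.exp (-(t + r^2/t)) ≤ Real.exp (-t) := by
          rw [Real.exp_le_exp]
          have : (0:ℝ) < r^2/t := by positivity
          linarith
        calc Real.exp (-(t + r^2/t)) / t ≤ Real.exp (-(t + r^2/t)) := by
              rw [div_le_iff₀ ht0]
              nlinarith [Real.exp_pos (-(t + r^2/t))]
          _ ≤ Real.exp (-t) := h2
  · -- bound integrable
    refine Integrable.add ?_ ?_
    · exact indicator_integrable_Ioi0 measurableSet_Ioc Set.Ioc_subset_Ioi_self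
        (integrableOn_const measure_Ioc_lt_top.ne)
    · refine indicator_integrable_Ioi0 measurableSet_Ioi (Set.Ioi_subset_Ioi zero_le_one) ?_
      have h := exp_neg_integrableOn_Ioi (1:ℝ) (b := 1) one_pos
      refine h.congr_fun (fun t _ => ?_) measurableSet_Ioi
      norm_num
  · -- pointwise limit
    rw [ae_restrict_iff' measurableSet_Ioi]
    filter_upwards with t ht
    have ht0 : (0:ℝ) < t := ht
    have hev : ∀ᶠ r in nhdsWithin (0:ℝ) (Set.Ioi 0),
        ((Set.Ioi r).indicator (fun u => Real.exp (-(u + r^2/u))/u) t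
          - (Set.Ioc r 1).indicator (fun u => 1/u) t)
        = Real.exp (-(t + r^2/t))/t - (Set.Ioc (0:ℝ) 1).indicator (fun u => 1/u) t := by
      filter_upwards [self_mem_nhdsWithin,
        eventually_nhdsWithin_of_eventually_nhds (eventually_lt_nhds ht0)] with r hr hrt
      have hr0 : (0:ℝ) < r := hr
      simp only [Set.indicator_apply, Set.mem_Ioi, Set.mem_Ioc]
      rw [if_pos hrt]
      congr 1
      rcases le_or_gt t 1 with h1 | h1
      · rw [if_pos (And.intro hrt h1), if_pos (And.intro ht0 h1)]
      · rw [if_neg (show ¬(r < t ∧ t ≤ 1) from fun hc => absurd hc.2 (not_le.2 h1)),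
          if_neg (show ¬(0 < t ∧ t ≤ 1) from fun hc => absurd hc.2 (not_le.2 h1))]
    have hval0 : Real.exp (-(t + 0^2/t))/t - (Set.Ioc (0:ℝ) 1).indicator (fun u => 1/u) t
        = hfun t := by
      rw [hhfun]
      simp only [Set.indicator_apply, Set.mem_Ioi, Set.mem_Ioc]
      rcases le_or_gt t 1 with h1 | h1
      · rw [if_pos (And.intro ht0 h1), if_pos (And.intro ht0 h1), if_neg (not_lt.2 h1)]
        rw [sub_div]
        norm_num
      · rw [if_neg (show ¬(0 < t ∧ t ≤ 1) from fun hc => absurd hc.2 (not_le.2 h1)),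
          if_neg (show ¬(0 < t ∧ t ≤ 1) from fun hc => absurd hc.2 (not_le.2 h1)), if_pos h1]
        norm_num
    have hcont : Filter.Tendsto (fun r : ℝ => Real.exp (-(t + r^2/t))/t
        - (Set.Ioc (0:ℝ) 1).indicator (fun u => 1/u) t) (nhds 0) (nhds (hfun t)) := by
      have hc : Continuous (fun r : ℝ => Real.exp (-(t + r^2/t))/t
          - (Set.Ioc (0:ℝ) 1).indicator (fun u => 1/u) t) := by
        refine Continuous.sub ?_ continuous_const
        exact (Real.continuous_exp.comp
          (continuous_const.add ((continuous_pow 2).div_const t)).neg).div_const t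
      have h2 := hc.tendsto 0
      rwa [hval0] at h2
    exact Filter.Tendsto.congr' (hev.mono fun r h => h.symm)
      (hcont.mono_left nhdsWithin_le_nhds)

lemma F_integral {r : ℝ} (hr0 : 0 < r) (hr1 : r < 1) :
    ∫ t in Set.Ioi (0:ℝ), ((Set.Ioi r).indicator (fun u => Real.exp (-(u + r^2/u))/u) t
      - (Set.Ioc r 1).indicator (fun u => 1/u) t)
    = (∫ t in Set.Ioi r, Real.exp (-(t + r^2/t))/t) + Real.log r := by
  have hint1 : IntegrableOn (fun u => Real.exp (-(u + r^2/u))/u) (Set.Ioi r) :=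
    (integrableOn_osc (by positivity)).mono_set (Set.Ioi_subset_Ioi hr0.le)
  have hsub2 : Set.Ioc r 1 ⊆ Set.Ioi (0:ℝ) := fun x hx => lt_trans hr0 hx.1
  have hint2 : IntegrableOn (fun u : ℝ => 1/u) (Set.Ioc r 1) := by
    rw [← intervalIntegrable_iff_integrableOn_Ioc_of_le hr1.le]
    refine ContinuousOn.intervalIntegrable ?_
    refine continuousOn_const.div continuousOn_id (fun x hx => ?_)
    rw [Set.uIcc_of_le hr1.le] at hx
    exact ne_of_gt (lt_of_lt_of_le hr0 hx.1)
  rw [integral_sub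
    (indicator_integrable_Ioi0 measurableSet_Ioi (Set.Ioi_subset_Ioi hr0.le) hint1)
    (indicator_integrable_Ioi0 measurableSet_Ioc hsub2 hint2),
    indicator_integral_Ioi0 measurableSet_Ioi (Set.Ioi_subset_Ioi hr0.le),
    indicator_integral_Ioi0 measurableSet_Ioc hsub2]
  have hlog : ∫ t in Set.Ioc r 1, (1:ℝ)/t = - Real.log r := by
    rw [← intervalIntegral.integral_of_le hr1.le,
      integral_one_div (by rw [Set.uIcc_of_le hr1.le]; exact fun hc => absurd hc.1 (not_le.2 hr0)),
      one_div, Real.log_inv]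
  rw [hlog]
  ring

end MirrorP1Aux

/-- the mirror-symmetric Gamma asymptotics for `ℙ¹`: for `z > 0`,
`lim_{q→0⁺} ( ∫₀^∞ e^{−(x+q/x)/z} dx/x − (log(z²/q) − 2γ) ) = 0`,
where `γ` is the Euler–Mascheroni constant. -/
theorem mirrorOscIntegral_P1_gamma_asymptotics (z : ℝ) (hz : 0 < z) :
    Filter.Tendsto
      (fun q : ℝ =>
        (∫ x in Set.Ioi (0 : ℝ), Real.exp (-(x + q / x) / z) / x) -
          (Real.log (z ^ 2 / q) - 2 * Real.eulerMascheroniConstant))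
      (nhdsWithin 0 (Set.Ioi (0 : ℝ))) (nhds 0) := by
  have hz2 : (0:ℝ) < z^2 := by positivity
  have key : Filter.Tendsto (fun r : ℝ => 2 * (∫ t in Set.Ioi (0:ℝ),
      ((Set.Ioi r).indicator (fun u => Real.exp (-(u + r^2/u))/u) t
        - (Set.Ioc r 1).indicator (fun u => 1/u) t)) + 2 * Real.eulerMascheroniConstant)
      (nhdsWithin 0 (Set.Ioi 0)) (nhds 0) := by
    have h := (tendsto_F.const_mul (2:ℝ)).add_const (2 * Real.eulerMascheroniConstant)
    have heq : (2:ℝ) * -Real.eulerMascheroniConstant + 2 * Real.eulerMascheroniConstant = 0 := by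
      ring
    rwa [heq] at h
  have hcomp : Filter.Tendsto (fun q : ℝ => Real.sqrt q / z)
      (nhdsWithin 0 (Set.Ioi 0)) (nhdsWithin 0 (Set.Ioi 0)) := by
    rw [tendsto_nhdsWithin_iff]
    constructor
    · have h0 : Filter.Tendsto (fun q : ℝ => Real.sqrt q / z) (nhds 0) (nhds 0) := by
        have := (Real.continuous_sqrt.div_const z).tendsto 0
        simpa using this
      exact h0.mono_left nhdsWithin_le_nhds
    · filter_upwards [self_mem_nhdsWithin] with q hq
      exact div_pos (Real.sqrt_pos.2 hq) hz
  refine Filter.Tendsto.congr' ?_ (key.comp hcomp)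
  filter_upwards [self_mem_nhdsWithin,
    eventually_nhdsWithin_of_eventually_nhds (eventually_lt_nhds hz2)] with q hq hqz2
  have hq0 : (0:ℝ) < q := hq
  set r : ℝ := Real.sqrt q / z with hrdef
  have hr0 : 0 < r := div_pos (Real.sqrt_pos.2 hq0) hz
  have hr1 : r < 1 := by
    rw [hrdef, div_lt_one hz]
    exact (Real.sqrt_lt' hz).2 (by nlinarith)
  have hr2 : r^2 = q / z^2 := by
    rw [hrdef, div_pow, Real.sq_sqrt hq0.le]
  have hlog : Real.log (z^2/q) = -(2 * Real.log r) := by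
    have h1 : Real.log (z^2/q) = - Real.log (q/z^2) := by
      rw [← Real.log_inv]
      congr 1
      rw [inv_div]
    rw [h1, ← hr2, Real.log_pow]
    norm_num
  show 2 * (∫ t in Set.Ioi (0:ℝ),
      ((Set.Ioi r).indicator (fun u => Real.exp (-(u + r^2/u))/u) t
        - (Set.Ioc r 1).indicator (fun u => 1/u) t)) + 2 * Real.eulerMascheroniConstant
    = (∫ x in Set.Ioi (0 : ℝ), Real.exp (-(x + q / x) / z) / x) -
        (Real.log (z ^ 2 / q) - 2 * Real.eulerMascheroniConstant)
  rw [F_integral hr0 hr1, osc_scaling hz hq0, ← hr2, osc_double hr0, hlog]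
  ring
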